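/- Let B be a bipartite graph whose two vertex classes both have size n, let d₁, …, d_n be the degrees of the vertices in one of the classes, and suppose d_k ≥ 1 for all k. Then the number μ(B) of perfect matchings of B satisfies μ(B) ≤ ∏_{k=1}^{n} (d_k!)^{1/d_k}. -/

import Mathlib

open scoped Classical

/-- Degree of a vertex of the first class of a bipartite graph `E ⊆ U × W`. -/
noncomputable def degL {U W : Type*} (E : Finset (U × W)) (a : U) : ℕ :=
  (E.filter fun e => e.1 = a).card

open Finset Real

/-- `bb d = (d!)^(1/d)`. -/
noncomputable def bb (d : ℕ) : ℝ := (Nat.factorial d : ℝ) ^ ((d : ℝ))⁻¹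

lemma one_le_bb (d : ℕ) : 1 ≤ bb d :=
  Real.one_le_rpow (by exact_mod_cast Nat.one_le_iff_ne_zero.mpr (Nat.factorial_ne_zero d))
    (by positivity)

lemma bb_pos (d : ℕ) : 0 < bb d := lt_of_lt_of_le one_pos (one_le_bb d)

lemma bb_pow_nat (d : ℕ) : bb d ^ d = (Nat.factorial d : ℝ) := by
  rcases Nat.eq_zero_or_pos d with h | h
  · subst h; simp
  · rw [bb, ← Real.rpow_natCast ((Nat.factorial d : ℝ) ^ ((d:ℝ))⁻¹) d,
      ← Real.rpow_mul (Nat.cast_nonneg _), inv_mul_cancel₀ (by positivity), Real.rpow_one]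

lemma bb_rpow (d : ℕ) (x : ℝ) : bb d ^ x = (Nat.factorial d : ℝ) ^ (x / d) := by
  rw [bb, ← Real.rpow_mul (Nat.cast_nonneg _), inv_mul_eq_div]

lemma degL_eq_card_filter {U W : Type*} [Fintype W] [DecidableEq U] [DecidableEq W]
    (E : Finset (U × W)) (a : U) :
    degL E a = (Finset.univ.filter fun w : W => (a, w) ∈ E).card := by
  rw [degL]
  apply Finset.card_bij (fun p _ => p.2)
  · rintro ⟨x, y⟩ hp
    simp only [mem_filter, mem_univ, true_and] at *
    obtain ⟨h1, h2⟩ := hp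
    subst h2; exact h1
  · rintro ⟨x, y⟩ hp ⟨x', y'⟩ hp' h
    simp only [mem_filter] at hp hp'
    cases h; rw [Prod.ext_iff]; exact ⟨hp.2.trans hp'.2.symm, rfl⟩
  · intro w hw
    simp only [mem_filter, mem_univ, true_and] at hw
    exact ⟨(a, w), by simp [hw], rfl⟩

lemma convexity_aux {κ : Type*} (s : Finset κ) (t : κ → ℕ) :
    ((∑ k ∈ s, t k : ℕ) : ℝ) ^ ((∑ k ∈ s, t k : ℕ) : ℝ) ≤
      (s.card : ℝ) ^ ((∑ k ∈ s, t k : ℕ) : ℝ) * ∏ k ∈ s, (t k : ℝ) ^ (t k : ℝ) := by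
  set T : ℕ := ∑ k ∈ s, t k with hT
  rcases Nat.eq_zero_or_pos T with h0 | hpos
  · have hall : ∀ k ∈ s, t k = 0 := fun k hk =>
      (Finset.sum_eq_zero_iff).mp h0.symm.symm k hk
    rw [h0]
    simp only [Nat.cast_zero, Real.rpow_zero, one_mul]
    rw [Finset.prod_congr rfl (fun k hk => by rw [hall k hk])]
    simp
  · set supp := s.filter (fun k => t k ≠ 0) with hsupp
    have hsum_supp : ∑ k ∈ supp, t k = T := Finset.sum_filter_ne_zero s
    have hsupp_ne : supp.Nonempty := by
      by_contra h
      rw [Finset.not_nonempty_iff_eq_empty] at h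
      rw [h, Finset.sum_empty] at hsum_supp
      omega
    have hTpos : (0:ℝ) < T := by exact_mod_cast hpos
    have hsc_pos : (0:ℝ) < supp.card := by exact_mod_cast Finset.card_pos.mpr hsupp_ne
    have hs_pos : (0:ℝ) < s.card := by
      exact_mod_cast Finset.card_pos.mpr (hsupp_ne.mono (Finset.filter_subset _ s))
    have hgm : ((T : ℝ) / supp.card) ≤ ∏ k ∈ supp, (t k : ℝ) ^ ((t k : ℝ) / T) := by
      have hw : ∀ k ∈ supp, (0:ℝ) < (t k : ℝ) / T := by
        intro k hk
        simp only [hsupp, Finset.mem_filter] at hk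
        have : (0:ℝ) < t k := by exact_mod_cast Nat.pos_of_ne_zero hk.2
        positivity
      have hw' : ∑ k ∈ supp, (t k : ℝ) / T = 1 := by
        rw [← Finset.sum_div]
        rw [show ∑ k ∈ supp, (t k : ℝ) = (T : ℝ) by rw [← Nat.cast_sum, hsum_supp]]
        exact div_self hTpos.ne'
      have hz : ∀ k ∈ supp, (0:ℝ) < t k := by
        intro k hk
        simp only [hsupp, Finset.mem_filter] at hk
        exact_mod_cast Nat.pos_of_ne_zero hk.2
      have hterm : ∀ k ∈ supp, ((t k : ℝ) / T) / (t k : ℝ) = 1 / (T:ℝ) := by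
        intro k hk
        rw [div_div, mul_comm, ← div_div, div_self (hz k hk).ne']
      have this2 : (∑ k ∈ supp, ((t k : ℝ) / T) / (t k : ℝ))⁻¹ ≤
          ∏ k ∈ supp, (t k : ℝ) ^ ((t k : ℝ) / T) :=
        Real.harm_mean_le_geom_mean_weighted supp (fun k => (t k : ℝ) / T)
          (fun k => (t k : ℝ)) hsupp_ne hw hw' hz
      have hsum : ∑ k ∈ supp, ((t k : ℝ) / T) / (t k : ℝ) = supp.card / T := by
        rw [Finset.sum_congr rfl hterm, Finset.sum_const, nsmul_eq_mul, mul_one_div]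
      rw [hsum] at this2
      rwa [inv_div] at this2
    have hmain : ((T:ℝ) / supp.card) ^ (T:ℝ) ≤ ∏ k ∈ s, (t k : ℝ) ^ (t k : ℝ) := by
      have h1 : ((T:ℝ) / supp.card) ^ (T:ℝ) ≤
          (∏ k ∈ supp, (t k : ℝ) ^ ((t k : ℝ) / T)) ^ (T:ℝ) :=
        Real.rpow_le_rpow (by positivity) hgm (by positivity)
      have h2 : (∏ k ∈ supp, (t k : ℝ) ^ ((t k : ℝ) / T)) ^ (T:ℝ) =
          ∏ k ∈ supp, (t k : ℝ) ^ (t k : ℝ) := by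
        rw [← Real.finset_prod_rpow _ _ (fun k hk => Real.rpow_nonneg (Nat.cast_nonneg _) _)]
        refine Finset.prod_congr rfl (fun k hk => ?_)
        rw [← Real.rpow_mul (Nat.cast_nonneg _), div_mul_cancel₀ _ hTpos.ne']
      have h3 : ∏ k ∈ supp, (t k : ℝ) ^ (t k : ℝ) = ∏ k ∈ s, (t k : ℝ) ^ (t k : ℝ) := by
        apply Finset.prod_subset (Finset.filter_subset _ s)
        intro x hx hnx
        simp only [hsupp, Finset.mem_filter, hx, true_and, not_not] at hnx
        rw [hnx]; simp
      rw [h2, h3] at h1; exact h1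
    calc (T:ℝ) ^ (T:ℝ) = ((s.card : ℝ) * ((T:ℝ) / s.card)) ^ (T:ℝ) := by
          rw [mul_div_cancel₀ _ hs_pos.ne']
      _ = (s.card : ℝ) ^ (T:ℝ) * ((T:ℝ) / s.card) ^ (T:ℝ) :=
          Real.mul_rpow (le_of_lt hs_pos) (by positivity)
      _ ≤ (s.card : ℝ) ^ (T:ℝ) * ((T:ℝ) / supp.card) ^ (T:ℝ) := by
          apply mul_le_mul_of_nonneg_left _ (by positivity)
          apply Real.rpow_le_rpow (by positivity) _ (by positivity)
          apply div_le_div_of_nonneg_left (le_of_lt hTpos) hsc_pos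
          exact_mod_cast Finset.card_le_card (Finset.filter_subset _ s)
      _ ≤ (s.card : ℝ) ^ (T:ℝ) * ∏ k ∈ s, (t k : ℝ) ^ (t k : ℝ) :=
          mul_le_mul_of_nonneg_left hmain (by positivity)

noncomputable def minorE {U W : Type} [Fintype U] [Fintype W] [DecidableEq U] [DecidableEq W]
    (E : Finset (U × W)) (i : U) (k : W) : Finset ({x : U // x ≠ i} × {y : W // y ≠ k}) :=
  Finset.univ.filter fun p => (p.1.1, p.2.1) ∈ E

lemma minor_degL {U W : Type} [Fintype U] [Fintype W] [DecidableEq U] [DecidableEq W]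
    (E : Finset (U × W)) (i : U) (k : W) (a : {x : U // x ≠ i}) :
    degL (minorE E i k) a = degL E a.1 - (if (a.1, k) ∈ E then 1 else 0) := by
  rw [degL_eq_card_filter, degL_eq_card_filter]
  have h1 : (Finset.univ.filter fun w' : {y : W // y ≠ k} => (a, w') ∈ minorE E i k).card
      = ((Finset.univ.filter fun w : W => (a.1, w) ∈ E).erase k).card := by
    apply Finset.card_bij (fun w' _ => w'.1)
    · intro w' hw'
      simp only [minorE, mem_filter, mem_univ, true_and, mem_erase] at hw' ⊢
      exact ⟨w'.2, hw'⟩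
    · intro w1 _ w2 _ h; exact Subtype.ext h
    · intro w hw
      simp only [mem_erase, mem_filter, mem_univ, true_and] at hw
      exact ⟨⟨w, hw.1⟩, by simp [minorE, hw.2], rfl⟩
  rw [h1]
  by_cases hk : (a.1, k) ∈ E
  · rw [if_pos hk, Finset.card_erase_of_mem (by simp [hk])]
  · rw [if_neg hk, Finset.erase_eq_of_notMem (by simp [hk]), Nat.sub_zero]

lemma minor_card_le {U W : Type} [Fintype U] [Fintype W] [DecidableEq U] [DecidableEq W]
    (E : Finset (U × W)) (i : U) (k : W) :
    Nat.card {f : U ≃ W // (∀ u, (u, f u) ∈ E) ∧ f i = k} ≤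
      Nat.card {g : {x : U // x ≠ i} ≃ {y : W // y ≠ k} // ∀ u', (u', g u') ∈ minorE E i k} := by
  refine Nat.card_le_card_of_injective
    (fun f => ⟨f.1.subtypeEquiv (fun a => not_congr ⟨fun ha => by rw [ha, f.2.2],
        fun hk' => f.1.injective (hk'.trans f.2.2.symm)⟩), ?_⟩) ?_
  · intro u'
    simp only [minorE, mem_filter, mem_univ, true_and, Equiv.subtypeEquiv_apply]
    exact f.2.1 u'.1
  · intro f1 f2 h
    apply Subtype.ext
    apply Equiv.ext
    intro x
    by_cases hx : x = i
    · rw [hx, f1.2.2, f2.2.2]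
    · have := congrArg (fun g => (g.1 ⟨x, hx⟩ : W)) h
      simpa using this

lemma arith_per_j (r m : ℕ) (h1 : 1 ≤ r) (h2 : r ≤ m) :
    (r : ℝ) * bb (r - 1) ^ (r - 1) * bb r ^ (m - r) = (Nat.factorial r : ℝ) ^ ((m : ℝ) / r) := by
  rw [bb_pow_nat]
  have hfac : (r : ℝ) * (Nat.factorial (r-1) : ℝ) = (Nat.factorial r : ℝ) := by
    rw [← Nat.cast_mul, Nat.mul_factorial_pred (by omega)]
  rw [hfac]
  have hrpos : (0:ℝ) < r := by exact_mod_cast h1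
  have hfpos : (0:ℝ) < (Nat.factorial r : ℝ) := by exact_mod_cast r.factorial_pos
  have h3 : (bb r) ^ (m - r) = (Nat.factorial r : ℝ) ^ (((m - r : ℕ) : ℝ) / r) := by
    rw [← Real.rpow_natCast (bb r) (m - r), bb_rpow]
  rw [h3]
  rw [show ((m - r : ℕ) : ℝ) = (m : ℝ) - r by rw [Nat.cast_sub h2]]
  have hexp : (m:ℝ)/r = 1 + ((m:ℝ) - r)/r := by field_simp; ring
  rw [hexp, Real.rpow_add hfpos, Real.rpow_one]

lemma bregman_main : ∀ n : ℕ, ∀ (U W : Type) [Fintype U] [Fintype W] [DecidableEq U]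
    [DecidableEq W], Fintype.card U = n → ∀ E : Finset (U × W),
    ((Nat.card {f : U ≃ W // ∀ u, (u, f u) ∈ E}) : ℝ) ≤ ∏ u : U, bb (degL E u) := by
  intro n
  induction n using Nat.strong_induction_on with
  | _ n IH =>
  intro U W _ _ _ _ hU E
  set S : Finset (U ≃ W) := Finset.univ.filter (fun f => ∀ u, (u, f u) ∈ E) with hS
  have hcard : Nat.card {f : U ≃ W // ∀ u, (u, f u) ∈ E} = S.card := by
    rw [Nat.card_eq_fintype_card, Fintype.card_subtype]
  rw [hcard]
  rcases Nat.eq_zero_or_pos S.card with h0 | hμpos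
  · rw [h0, Nat.cast_zero]
    exact Finset.prod_nonneg fun u _ => le_of_lt (bb_pos _)
  obtain ⟨σ₀, hσ₀S⟩ := Finset.card_pos.mp hμpos
  have hσ₀E : ∀ u, (u, σ₀ u) ∈ E := (Finset.mem_filter.mp hσ₀S).2
  have hWcard : Fintype.card W = n := by rw [← hU]; exact (Fintype.card_congr σ₀).symm
  have hdeg1 : ∀ j : U, 1 ≤ degL E j := by
    intro j
    rw [degL_eq_card_filter]
    exact Finset.card_pos.mpr ⟨σ₀ j, Finset.mem_filter.mpr ⟨Finset.mem_univ _, hσ₀E j⟩⟩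
  have hdegn : ∀ j : U, degL E j ≤ n := by
    intro j
    rw [degL_eq_card_filter, ← hWcard, ← Finset.card_univ]
    exact Finset.card_le_card (Finset.filter_subset _ _)
  rcases Nat.eq_zero_or_pos n with hn0 | hnpos
  · have hUe : IsEmpty U := Fintype.card_eq_zero_iff.mp (by rw [hU, hn0])
    have hsub : Subsingleton (U ≃ W) :=
      ⟨fun a b => Equiv.coe_fn_injective (funext fun x => (hUe.elim x))⟩
    have hle1 : S.card ≤ 1 := by
      calc S.card ≤ Fintype.card (U ≃ W) := by
            rw [← Finset.card_univ]; exact Finset.card_le_card (Finset.subset_univ _)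
        _ ≤ 1 := Fintype.card_le_one_iff_subsingleton.mpr hsub
    calc (S.card : ℝ) ≤ 1 := by exact_mod_cast hle1
      _ = ∏ u : U, bb (degL E u) := by rw [Finset.univ_eq_empty, Finset.prod_empty]
  set μ := S.card with hμ
  set mu2 : U → W → ℕ := fun i k => (S.filter fun σ => σ i = k).card with hmu2
  have hsum_mu2 : ∀ i, ∑ k : W, mu2 i k = μ := fun i =>
    (Finset.card_eq_sum_card_fiberwise (f := fun σ : U ≃ W => σ i) (t := Finset.univ)
      (fun σ _ => Finset.mem_univ _)).symm
  have hmu2_zero : ∀ i k, (i, k) ∉ E → mu2 i k = 0 := by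
    intro i k hik
    simp only [hmu2, Finset.card_eq_zero, Finset.filter_eq_empty_iff]
    intro σ hσ hk
    exact hik (by rw [← hk]; exact (Finset.mem_filter.mp hσ).2 i)
  set P : U → W → ℝ := fun i k => ∏ j ∈ Finset.univ.erase i,
    bb (degL E j - if (j, k) ∈ E then 1 else 0) with hP
  -- Step (c): minor bound via induction hypothesis
  have hc : ∀ i k, (mu2 i k : ℝ) ≤ P i k := by
    intro i k
    have e1 : mu2 i k = Nat.card {f : U ≃ W // (∀ u, (u, f u) ∈ E) ∧ f i = k} := by
      rw [Nat.card_eq_fintype_card, Fintype.card_subtype]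
      simp only [hmu2, hS, Finset.filter_filter]
    have hU' : Fintype.card {x : U // x ≠ i} = n - 1 := by
      rw [Fintype.card_subtype_compl, Fintype.card_subtype_eq, hU]
    have e3 := IH (n-1) (by omega) {x : U // x ≠ i} {y : W // y ≠ k} hU' (minorE E i k)
    have e4 : (∏ u' : {x : U // x ≠ i}, bb (degL (minorE E i k) u')) = P i k := by
      have hcongr : ∀ u' : {x : U // x ≠ i}, bb (degL (minorE E i k) u') =
          bb (degL E u'.1 - if (u'.1, k) ∈ E then 1 else 0) := fun u' => by rw [minor_degL]
      rw [Fintype.prod_congr _ _ hcongr, hP]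
      exact (Finset.prod_subtype (Finset.univ.erase i)
        (fun x => by simp) (fun j => bb (degL E j - if (j, k) ∈ E then 1 else 0))).symm
    calc (mu2 i k : ℝ)
        ≤ (Nat.card {g : {x : U // x ≠ i} ≃ {y : W // y ≠ k} //
            ∀ u', (u', g u') ∈ minorE E i k} : ℝ) := by
          rw [e1]; exact_mod_cast minor_card_le E i k
      _ ≤ ∏ u' : {x : U // x ≠ i}, bb (degL (minorE E i k) u') := e3
      _ = P i k := e4
  have hP_pos : ∀ i k, 0 < P i k := fun i k => Finset.prod_pos fun j _ => bb_pos _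
  -- Step (d): convexity bound for each i
  have hd : ∀ i : U, (μ:ℝ) ^ (μ:ℝ) ≤ (degL E i : ℝ) ^ (μ:ℝ) *
      ∏ k : W, (mu2 i k : ℝ) ^ (mu2 i k : ℝ) := by
    intro i
    have hNi : (Finset.univ.filter fun k : W => (i, k) ∈ E).card = degL E i :=
      (degL_eq_card_filter E i).symm
    have hsum : ∑ k ∈ Finset.univ.filter (fun k : W => (i, k) ∈ E), mu2 i k = μ := by
      rw [← hsum_mu2 i]
      apply Finset.sum_subset (Finset.filter_subset _ _)
      intro k _ hk
      exact hmu2_zero i k (fun hik => hk (Finset.mem_filter.mpr ⟨Finset.mem_univ _, hik⟩))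
    have hconv := convexity_aux (Finset.univ.filter fun k : W => (i, k) ∈ E) (mu2 i)
    rw [hsum, hNi] at hconv
    have hprod : ∏ k ∈ Finset.univ.filter (fun k : W => (i, k) ∈ E),
        (mu2 i k : ℝ) ^ (mu2 i k : ℝ) = ∏ k : W, (mu2 i k : ℝ) ^ (mu2 i k : ℝ) := by
      apply Finset.prod_subset (Finset.filter_subset _ _)
      intro k _ hk
      have hz : mu2 i k = 0 :=
        hmu2_zero i k (fun hik => hk (Finset.mem_filter.mpr ⟨Finset.mem_univ _, hik⟩))
      rw [hz]; simp
    rw [hprod] at hconv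
    exact hconv
  -- Steps (e),(f)
  have hef : ∀ i : U, (∏ k : W, (mu2 i k : ℝ) ^ (mu2 i k : ℝ)) ≤ ∏ σ ∈ S, P i (σ i) := by
    intro i
    have hfib : ∏ σ ∈ S, P i (σ i) =
        ∏ k : W, ∏ σ ∈ S.filter (fun σ => σ i = k), P i (σ i) :=
      (Finset.prod_fiberwise_of_maps_to (fun σ _ => Finset.mem_univ _) _).symm
    rw [hfib]
    apply Finset.prod_le_prod
    · intro k _; exact Real.rpow_nonneg (Nat.cast_nonneg _) _
    · intro k _
      have hconst : ∏ σ ∈ S.filter (fun σ => σ i = k), P i (σ i) = P i k ^ (mu2 i k) := by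
        rw [Finset.prod_congr rfl (fun σ hσ => by rw [(Finset.mem_filter.mp hσ).2]),
          Finset.prod_const]
      rw [hconst, ← Real.rpow_natCast (P i k) (mu2 i k)]
      exact Real.rpow_le_rpow (Nat.cast_nonneg _) (hc i k) (Nat.cast_nonneg _)
  -- Step (g): multiply ovedegL E i
  have hg : (μ:ℝ) ^ ((μ:ℝ) * n) ≤
      ∏ σ ∈ S, ((∏ j : U, (degL E j : ℝ)) * ∏ j : U, P j (σ j)) := by
    have h1 : ∏ _i : U, ((μ:ℝ) ^ (μ:ℝ)) ≤
        ∏ i : U, ((degL E i : ℝ) ^ (μ:ℝ) * ∏ σ ∈ S, P i (σ i)) := by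
      apply Finset.prod_le_prod
      · intro i _; exact Real.rpow_nonneg (Nat.cast_nonneg _) _
      · intro i _
        exact le_trans (hd i) (mul_le_mul_of_nonneg_left (hef i)
          (Real.rpow_nonneg (Nat.cast_nonneg _) _))
    have hLHS : ∏ _i : U, ((μ:ℝ) ^ (μ:ℝ)) = (μ:ℝ) ^ ((μ:ℝ) * n) := by
      rw [Finset.prod_const, Finset.card_univ, hU, ← Real.rpow_natCast ((μ:ℝ) ^ (μ:ℝ)) n,
        ← Real.rpow_mul (Nat.cast_nonneg _)]
    have hRHS : ∏ i : U, ((degL E i : ℝ) ^ (μ:ℝ) * ∏ σ ∈ S, P i (σ i)) =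
        ∏ σ ∈ S, ((∏ j : U, (degL E j : ℝ)) * ∏ j : U, P j (σ j)) := by
      rw [Finset.prod_mul_distrib, Finset.prod_mul_distrib]
      congr 1
      · rw [Real.finset_prod_rpow _ _ (fun j _ => Nat.cast_nonneg _),
          Real.rpow_natCast, Finset.prod_const]
      · exact Finset.prod_comm
    rw [hLHS] at h1
    rw [hRHS] at h1
    exact h1
  -- Step (h): per-matching computation
  have hh : ∀ σ ∈ S, (∏ j : U, (degL E j : ℝ)) * ∏ j : U, P j (σ j) =
      ∏ j : U, (Nat.factorial (degL E j) : ℝ) ^ ((n:ℝ)/(degL E j)) := by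
    intro σ hσ
    have hσE : ∀ u, (u, σ u) ∈ E := (Finset.mem_filter.mp hσ).2
    have hswap : ∏ i : U, P i (σ i) = ∏ j : U, ∏ i ∈ Finset.univ.erase j,
        bb (degL E j - if (j, σ i) ∈ E then 1 else 0) := by
      simp only [hP]
      exact Finset.prod_comm' (fun i j => by
        simp only [Finset.mem_univ, Finset.mem_erase, true_and, and_true]
        exact ne_comm)
    have hj : ∀ j : U, (∏ i ∈ Finset.univ.erase j, bb (degL E j - if (j, σ i) ∈ E then 1 else 0))
        = bb (degL E j - 1) ^ (degL E j - 1) * bb (degL E j) ^ (n - degL E j) := by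
      intro j
      have hA : ((Finset.univ.erase j).filter fun i => (j, σ i) ∈ E).card = degL E j - 1 := by
        have himg : ((Finset.univ.erase j).filter fun i => (j, σ i) ∈ E).image σ
            = (Finset.univ.filter fun w => (j, w) ∈ E).erase (σ j) := by
          ext w
          simp only [Finset.mem_image, Finset.mem_filter, Finset.mem_erase, Finset.mem_univ,
            true_and, and_true]
          constructor
          · rintro ⟨i, ⟨hij, hE⟩, rfl⟩
            exact ⟨fun h => hij (σ.injective h), hE⟩
          · rintro ⟨hw, hE⟩
            exact ⟨σ.symm w, ⟨fun h => hw (by rw [← h, Equiv.apply_symm_apply]),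
              by rw [Equiv.apply_symm_apply]; exact hE⟩, Equiv.apply_symm_apply σ w⟩
        have hcardimg := congrArg Finset.card himg
        rw [Finset.card_image_of_injective _ σ.injective] at hcardimg
        have hmem : σ j ∈ (Finset.univ.filter fun w => (j, w) ∈ E) :=
          Finset.mem_filter.mpr ⟨Finset.mem_univ _, hσE j⟩
        rw [hcardimg, Finset.card_erase_of_mem hmem, ← degL_eq_card_filter]
      have hB : ((Finset.univ.erase j).filter fun i => ¬ (j, σ i) ∈ E).card = n - degL E j := by
        have htot := Finset.card_filter_add_card_filter_not
          (s := Finset.univ.erase j) (p := fun i => (j, σ i) ∈ E)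
        rw [Finset.card_erase_of_mem (Finset.mem_univ j), Finset.card_univ, hU, hA] at htot
        have hd1 := hdeg1 j
        have hdn := hdegn j
        omega
      rw [← Finset.prod_filter_mul_prod_filter_not (Finset.univ.erase j)
        (fun i => (j, σ i) ∈ E)]
      have h1 : ∏ i ∈ (Finset.univ.erase j).filter (fun i => (j, σ i) ∈ E),
          bb (degL E j - if (j, σ i) ∈ E then 1 else 0) = bb (degL E j - 1) ^ (degL E j - 1) := by
        rw [Finset.prod_congr rfl (fun i hi => by
          rw [if_pos (Finset.mem_filter.mp hi).2]), Finset.prod_const, hA]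
      have h2 : ∏ i ∈ (Finset.univ.erase j).filter (fun i => ¬ (j, σ i) ∈ E),
          bb (degL E j - if (j, σ i) ∈ E then 1 else 0) = bb (degL E j) ^ (n - degL E j) := by
        rw [Finset.prod_congr rfl (fun i hi => by
          rw [if_neg (Finset.mem_filter.mp hi).2, Nat.sub_zero]), Finset.prod_const, hB]
      rw [h1, h2]
    calc (∏ j : U, (degL E j : ℝ)) * ∏ j : U, P j (σ j)
        = ∏ j : U, ((degL E j : ℝ) * (bb (degL E j - 1) ^ (degL E j - 1) * bb (degL E j) ^ (n - degL E j))) := by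
          rw [hswap, Finset.prod_congr rfl (fun j _ => hj j), ← Finset.prod_mul_distrib]
      _ = ∏ j : U, (Nat.factorial (degL E j) : ℝ) ^ ((n:ℝ)/(degL E j)) := by
          refine Finset.prod_congr rfl (fun j _ => ?_)
          rw [← mul_assoc]
          exact arith_per_j (degL E j) n (hdeg1 j) (hdegn j)
  -- Step (i): conclude
  have hRHSconst : ∏ σ ∈ S, ∏ j : U, (Nat.factorial (degL E j) : ℝ) ^ ((n:ℝ)/(degL E j)) =
      (∏ j : U, bb (degL E j)) ^ ((μ:ℝ) * n) := by
    have hper : ∏ j : U, (Nat.factorial (degL E j) : ℝ) ^ ((n:ℝ)/(degL E j)) =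
        (∏ j : U, bb (degL E j)) ^ (n:ℝ) := by
      rw [← Real.finset_prod_rpow _ _ (fun j _ => le_of_lt (bb_pos _))]
      exact Finset.prod_congr rfl (fun j _ => (bb_rpow _ _).symm)
    rw [Finset.prod_const, hper, ← Real.rpow_natCast ((∏ j : U, bb (degL E j)) ^ (n:ℝ)) μ,
      ← Real.rpow_mul (Finset.prod_nonneg (fun j _ => le_of_lt (bb_pos _))), mul_comm]
  have hchain : (μ:ℝ) ^ ((μ:ℝ) * n) ≤ (∏ j : U, bb (degL E j)) ^ ((μ:ℝ) * n) := by
    calc (μ:ℝ) ^ ((μ:ℝ) * n) ≤ ∏ σ ∈ S, ((∏ j : U, (degL E j : ℝ)) * ∏ j : U, P j (σ j)) := hg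
      _ = ∏ σ ∈ S, ∏ j : U, (Nat.factorial (degL E j) : ℝ) ^ ((n:ℝ)/(degL E j)) :=
          Finset.prod_congr rfl hh
      _ = (∏ j : U, bb (degL E j)) ^ ((μ:ℝ) * n) := hRHSconst
  have hexp_pos : (0:ℝ) < (μ:ℝ) * n := by
    have h1 : (0:ℝ) < (μ:ℝ) := by exact_mod_cast hμpos
    have h2 : (0:ℝ) < (n:ℝ) := by exact_mod_cast hnpos
    positivity
  exact (Real.rpow_le_rpow_iff (Nat.cast_nonneg _)
    (Finset.prod_nonneg (fun j _ => le_of_lt (bb_pos _))) hexp_pos).mp hchain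

/-- Brégman's theorem: the number of perfect matchings of a bipartite graph
with classes of size `n` is at most `∏ₖ (dₖ!)^{1/dₖ}`, where the `dₖ` are the degrees of
the vertices of one class. -/
theorem bregman_upper_bound_on_perfect_matchings :
    ∀ n : ℕ,
    ∀ (U W : Type) [Fintype U] [Fintype W] [DecidableEq U] [DecidableEq W],
      Fintype.card U = n → Fintype.card W = n →
    ∀ E : Finset (U × W),
      (∀ u : U, 1 ≤ degL E u) →
      ((Nat.card {f : U ≃ W // ∀ u, (u, f u) ∈ E}) : ℝ) ≤
        ∏ u : U, ((Nat.factorial (degL E u) : ℝ)) ^ (((degL E u : ℝ))⁻¹) := by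
  intro n U W _ _ _ _ hU _ E _
  exact bregman_main n U W hU E
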